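/- Let f : ℤ → ℝ be unimodal and let k ≥ 1. Define F : ℤ → ℝ by F(z) = ∑_{i=0}^{k-1} f(z+i). Then F is unimodal. -/

import Mathlib

private lemma monoOn_of_step (F : ℤ → ℝ) (M : ℤ) (h : ∀ z, z < M → F z ≤ F (z + 1)) :
    MonotoneOn F (Set.Iic M) := by
  intro a ha b hb hab
  have key : ∀ b, a ≤ b → b ≤ M → F a ≤ F b := fun b hab =>
    Int.le_induction (motive := fun b _ => b ≤ M → F a ≤ F b)
      (fun _ => le_refl _)
      (fun n _ ih hnM => (ih (by omega)).trans (h n (by omega))) b hab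
  exact key b hab hb

private lemma antiOn_of_step (F : ℤ → ℝ) (M : ℤ) (h : ∀ z, M ≤ z → F (z + 1) ≤ F z) :
    AntitoneOn F (Set.Ici M) := by
  intro a ha b hb hab
  have key : ∀ b, a ≤ b → F b ≤ F a := fun b hab =>
    Int.le_induction (motive := fun b _ => F b ≤ F a)
      (le_refl _)
      (fun n hn ih => (h n (le_trans ha hn)).trans ih) b hab
  exact key b hab

/-- Rolling sums of a unimodal function on ℤ are unimodal. -/
theorem rolling_sum_unimodal
    (f : ℤ → ℝ) (k : ℕ) (hk : 1 ≤ k)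
    (m : ℤ)
    (hmono : MonotoneOn f (Set.Iic m)) (hanti : AntitoneOn f (Set.Ici m)) :
    ∃ M : ℤ,
      MonotoneOn (fun z : ℤ => ∑ i ∈ Finset.range k, f (z + i)) (Set.Iic M) ∧
      AntitoneOn (fun z : ℤ => ∑ i ∈ Finset.range k, f (z + i)) (Set.Ici M) := by
  classical
  set F : ℤ → ℝ := fun z : ℤ => ∑ i ∈ Finset.range k, f (z + i) with hF
  -- step identity
  have hstep : ∀ z : ℤ, F (z + 1) = F z + (f (z + k) - f z) := by
    intro z
    have h1 : F (z + 1) = ∑ i ∈ Finset.range k, f (z + (i + 1)) := by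
      apply Finset.sum_congr rfl
      intro i _
      congr 1
      push_cast
      ring
    have h2 := Finset.sum_range_succ' (fun i : ℕ => f (z + (i : ℤ))) k
    have h3 := Finset.sum_range_succ (fun i : ℕ => f (z + (i : ℤ))) k
    push_cast at h2 h3
    simp only [add_zero] at h2
    rw [h1]
    rw [h3] at h2
    linarith
  have hD2 : ∀ z : ℤ, m ≤ z → f (z + k) ≤ f z := by
    intro z hz
    exact hanti hz (by simp only [Set.mem_Ici]; omega) (by omega)
  by_cases hS : ∃ z : ℤ, f (z + k) < f z
  · -- least such z
    obtain ⟨M, hM, hMmin⟩ := Int.exists_least_of_bdd (P := fun z => f (z + k) < f z)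
      ⟨m - k, by
        intro z hz
        by_contra hc
        push_neg at hc
        have : f z ≤ f (z + k) :=
          hmono (by simp only [Set.mem_Iic]; omega) (by simp only [Set.mem_Iic]; omega) (by omega)
        linarith⟩ hS
    refine ⟨M, ?_, ?_⟩
    · apply monoOn_of_step
      intro z hz
      rw [hstep]
      have : ¬ f (z + k) < f z := fun h => absurd (hMmin z h) (by omega)
      push_neg at this
      linarith
    · apply antiOn_of_step
      intro z hz
      rw [hstep]
      have hkey : f (z + k) ≤ f z := by
        rcases eq_or_lt_of_le hz with rfl | hlt
        · exact le_of_lt hM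
        · rcases le_or_gt m z with hmz | hzm
          · exact hD2 z hmz
          · -- M < z < m
            have hMk : m < M + k := by
              by_contra hc
              push_neg at hc
              have : f M ≤ f (M + k) :=
                hmono (by simp only [Set.mem_Iic]; omega)
                  (by simp only [Set.mem_Iic]; omega) (by omega)
              linarith
            have h1 : f M ≤ f z :=
              hmono (by simp only [Set.mem_Iic]; omega)
                (by simp only [Set.mem_Iic]; omega) (by omega)
            have h2 : f (z + k) ≤ f (M + k) :=
              hanti (by simp only [Set.mem_Ici]; omega)
                (by simp only [Set.mem_Ici]; omega) (by omega)
            linarith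
      linarith
  · push_neg at hS
    refine ⟨m, ?_, ?_⟩
    · apply monoOn_of_step
      intro z _
      rw [hstep]
      linarith [hS z]
    · apply antiOn_of_step
      intro z hz
      rw [hstep]
      linarith [hD2 z hz]
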